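/- For n a multiple of 4, vertices i, j with 1 < i < n, 1 < j < n, i ≠ j, and any t ∈ ℝ, the fidelity satisfies |[exp(-ι·t·H(K_n^-))]_{ij}| ≤ 2/n; thus no perfect state transfer occurs between any pair of adjacent interior vertices of K_n^-. -/

import Mathlib

set_option maxHeartbeats 1000000

open NormedSpace Nat

lemma exp_smul_idem_aux {A : Type*} [NormedRing A] [NormedAlgebra ℂ A] [CompleteSpace A]
    (Q : A) (hQ : Q * Q = Q) (v : ℂ) :
    NormedSpace.exp (v • Q) = 1 + (Complex.exp v - 1) • Q := by
  have hQpow : ∀ k : ℕ, Q ^ (k + 1) = Q := by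
    intro k; induction k with
    | zero => simp
    | succ k ih => rw [pow_succ, ih, hQ]
  have h : (fun k : ℕ => ((k !)⁻¹ : ℂ) * v ^ k) = fun k : ℕ => ((k !)⁻¹ : ℂ) • v ^ k := by
    funext k; rw [smul_eq_mul]
  have hsc : Summable fun k : ℕ => ((k !)⁻¹ : ℂ) * v ^ k := by
    rw [h]; exact NormedSpace.expSeries_summable' (𝕂 := ℂ) v
  have hsc1 : Summable fun k : ℕ => (((k + 1)!)⁻¹ : ℂ) * v ^ (k + 1) :=
    hsc.comp_injective (add_left_injective 1)
  have hexpv : Complex.exp v = 1 + ∑' k : ℕ, (((k + 1)!)⁻¹ : ℂ) * v ^ (k + 1) := by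
    rw [Complex.exp_eq_exp_ℂ, NormedSpace.exp_eq_tsum ℂ]
    dsimp only
    rw [← h, Summable.tsum_eq_zero_add hsc]
    simp
  have hsum : Summable fun k : ℕ => ((k !)⁻¹ : ℂ) • (v • Q) ^ k :=
    NormedSpace.expSeries_summable' (𝕂 := ℂ) (v • Q)
  rw [NormedSpace.exp_eq_tsum ℂ]
  dsimp only
  rw [Summable.tsum_eq_zero_add hsum]
  have hterm : ∀ k : ℕ, (((k + 1)!)⁻¹ : ℂ) • (v • Q) ^ (k + 1)
      = ((((k + 1)!)⁻¹ : ℂ) * v ^ (k + 1)) • Q := by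
    intro k
    rw [smul_pow, hQpow, smul_smul]
  simp only [hterm, pow_zero, Nat.factorial_zero, Nat.cast_one, inv_one, one_smul]
  rw [Summable.tsum_smul_const hsc1, hexpv]
  ring_nf
  congr 2
  exact tsum_congr fun k => by ring

lemma matrix_exp_smul_idem {n : ℕ} (Q : Matrix (Fin n) (Fin n) ℂ) (hQ : Q * Q = Q) (v : ℂ) :
    NormedSpace.exp (v • Q) = 1 + (Complex.exp v - 1) • Q := by
  letI : SeminormedRing (Matrix (Fin n) (Fin n) ℂ) := Matrix.linftyOpSemiNormedRing
  letI : NormedRing (Matrix (Fin n) (Fin n) ℂ) := Matrix.linftyOpNormedRing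
  letI : NormedAlgebra ℂ (Matrix (Fin n) (Fin n) ℂ) := Matrix.linftyOpNormedAlgebra
  exact exp_smul_idem_aux Q hQ v

lemma sum_pair_of_support {ι : Type*} [Fintype ι] [DecidableEq ι] {a b : ι} (hab : a ≠ b)
    (f : ι → ℂ) (hf : ∀ k, k ≠ a → k ≠ b → f k = 0) : ∑ k, f k = f a + f b := by
  rw [← Finset.sum_pair hab]
  refine (Finset.sum_subset (Finset.subset_univ _) ?_).symm
  intro x _ hx
  simp only [Finset.mem_insert, Finset.mem_singleton] at hx
  push_neg at hx
  exact hf x hx.1 hx.2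

theorem complete_minus_edge_interior_bound (n : ℕ) (hn : 4 ≤ n) (hmod : n % 4 = 0)
    (t : ℝ) (a b : Fin n) (ha : (a : ℕ) = 0) (hb : (b : ℕ) = n - 1)
    (P : Matrix (Fin n) (Fin n) ℂ)
    (hP : P = Matrix.of fun i j =>
      if (i = a ∧ j = a) ∨ (i = b ∧ j = b) then 1
      else if (i = a ∧ j = b) ∨ (i = b ∧ j = a) then -1 else 0)
    (H : Matrix (Fin n) (Fin n) ℂ)
    (hH : H = (n * (n - 1) / 2 - 1 : ℂ) • (1 : Matrix (Fin n) (Fin n) ℂ)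
        - 2 • ((n : ℂ) • (1 : Matrix (Fin n) (Fin n) ℂ)
            - (Matrix.of fun _ _ : Fin n => (1 : ℂ)) - P))
    (i j : Fin n) (hij : i ≠ j) (hia : i ≠ a) (hib : i ≠ b) (hja : j ≠ a) (hjb : j ≠ b) :
    ‖NormedSpace.exp ((-(Complex.I * t)) • H) i j‖ ≤ 2 / n := by
  have hn0 : (n : ℂ) ≠ 0 := Nat.cast_ne_zero.mpr (by omega)
  have hab : a ≠ b := by
    intro h
    have := congrArg Fin.val h
    rw [ha, hb] at this
    omega
  set J : Matrix (Fin n) (Fin n) ℂ := Matrix.of fun _ _ => (1 : ℂ) with hJ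
  set s : ℂ := -(Complex.I * t) with hs
  set c : ℂ := (n * (n - 1) / 2 - 1 : ℂ) with hc
  set u : ℂ := 2 * s with hu
  set d : ℂ := s * (c - 2 * n) with hd
  -- zero entries of P
  have hPzero : ∀ x y : Fin n, x ≠ a → x ≠ b → P x y = 0 := by
    intro x y hxa hxb; rw [hP]; simp [hxa, hxb]
  have hPzero' : ∀ x y : Fin n, y ≠ a → y ≠ b → P x y = 0 := by
    intro x y hya hyb; rw [hP]; simp [hya, hyb]
  -- algebra facts
  have hJJ : J * J = (n : ℂ) • J := by
    ext x y
    simp [Matrix.mul_apply, hJ, Finset.card_univ]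
  have hJP : J * P = 0 := by
    ext x y
    rw [Matrix.mul_apply]
    have h1 : ∀ k : Fin n, J x k * P k y = P k y := by intro k; simp [hJ]
    simp only [h1]
    rw [sum_pair_of_support hab _ (fun k hka hkb => hPzero k y hka hkb), hP]
    by_cases hya : y = a <;> by_cases hyb : y = b <;>
      simp [hya, hyb, hab, Ne.symm hab]
  have hPJ : P * J = 0 := by
    ext x y
    rw [Matrix.mul_apply]
    have h1 : ∀ k : Fin n, P x k * J k y = P x k := by intro k; simp [hJ]
    simp only [h1]
    rw [sum_pair_of_support hab _ (fun k hka hkb => hPzero' x k hka hkb), hP]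
    by_cases hxa : x = a <;> by_cases hxb : x = b <;>
      simp [hxa, hxb, hab, Ne.symm hab]
  have hPP : P * P = (2 : ℂ) • P := by
    ext x y
    rw [Matrix.mul_apply]
    rw [sum_pair_of_support hab _ (fun k hka hkb => by rw [hPzero' x k hka hkb, zero_mul])]
    rw [hP]
    by_cases hxa : x = a <;> by_cases hxb : x = b <;>
      by_cases hya : y = a <;> by_cases hyb : y = b <;>
      simp [hya, hyb, hab, Ne.symm hab] <;> simp_all <;> ring
  set Q' : Matrix (Fin n) (Fin n) ℂ := (n : ℂ)⁻¹ • J with hQ'def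
  set R' : Matrix (Fin n) (Fin n) ℂ := (2 : ℂ)⁻¹ • P with hR'def
  have hQ' : Q' * Q' = Q' := by
    rw [hQ'def, smul_mul_assoc, mul_smul_comm, hJJ, smul_smul, smul_smul]
    congr 1
    field_simp
  have hR' : R' * R' = R' := by
    rw [hR'def, smul_mul_assoc, mul_smul_comm, hPP, smul_smul, smul_smul]
    norm_num
  have hQR : Q' * R' = 0 := by
    rw [hQ'def, hR'def, smul_mul_assoc, mul_smul_comm, hJP, smul_zero, smul_zero]
  -- decomposition
  have hdecomp : s • H = d • (1 : Matrix (Fin n) (Fin n) ℂ) + (u • J + u • P) := by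
    rw [hH, two_smul]
    ext x y
    simp only [Matrix.smul_apply, Matrix.sub_apply, Matrix.add_apply, Matrix.one_apply,
      Matrix.of_apply, hJ, hd, hu, smul_eq_mul]
    split_ifs <;> ring
  -- exponentials
  have hcomm1 : Commute (d • (1 : Matrix (Fin n) (Fin n) ℂ)) (u • J + u • P) :=
    (Commute.one_left _).smul_left d
  have hcommJP : Commute J P := by
    unfold Commute SemiconjBy
    rw [hJP, hPJ]
  have hcomm2 : Commute (u • J) (u • P) := (hcommJP.smul_left u).smul_right u
  have hsplit : NormedSpace.exp (s • H) =
      NormedSpace.exp (d • (1 : Matrix (Fin n) (Fin n) ℂ)) *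
        (NormedSpace.exp (u • J) * NormedSpace.exp (u • P)) := by
    rw [hdecomp, Matrix.exp_add_of_commute _ _ hcomm1, Matrix.exp_add_of_commute _ _ hcomm2]
  have e1 : NormedSpace.exp (d • (1 : Matrix (Fin n) (Fin n) ℂ)) =
      Complex.exp d • (1 : Matrix (Fin n) (Fin n) ℂ) := by
    rw [matrix_exp_smul_idem 1 (by rw [mul_one]) d]
    module
  have e2 : NormedSpace.exp (u • J) = 1 + (Complex.exp (u * n) - 1) • Q' := by
    have huJ : u • J = (u * n) • Q' := by
      rw [hQ'def, smul_smul, mul_assoc, mul_inv_cancel₀ hn0, mul_one]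
    rw [huJ, matrix_exp_smul_idem Q' hQ' _]
  have e3 : NormedSpace.exp (u • P) = 1 + (Complex.exp (2 * u) - 1) • R' := by
    have huP : u • P = (2 * u) • R' := by
      rw [hR'def, smul_smul]
      congr 1
      ring
    rw [huP, matrix_exp_smul_idem R' hR' _]
  set α : ℂ := Complex.exp (u * n) - 1 with hα
  set β : ℂ := Complex.exp (2 * u) - 1 with hβ
  have hfinal : NormedSpace.exp (s • H) =
      Complex.exp d • ((1 : Matrix (Fin n) (Fin n) ℂ) + α • Q' + β • R') := by
    rw [hsplit, e1, e2, e3, smul_mul_assoc, one_mul]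
    congr 1
    have hz : (α • Q') * (β • R') = 0 := by
      rw [smul_mul_assoc, mul_smul_comm, hQR, smul_zero, smul_zero]
    rw [mul_add, add_mul, add_mul, one_mul, mul_one, hz, add_zero, one_mul]
  have hentry : NormedSpace.exp (s • H) i j = Complex.exp d * (α * (n : ℂ)⁻¹) := by
    rw [hfinal]
    have hPij : P i j = 0 := hPzero i j hia hib
    simp only [Matrix.smul_apply, Matrix.add_apply, Matrix.one_apply_ne hij, hQ'def, hR'def,
      Matrix.of_apply, hJ, hPij, smul_eq_mul]
    ring
  rw [hentry, norm_mul, norm_mul]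
  have h1 : ‖Complex.exp d‖ = 1 := by
    have hw : c - 2 * (n : ℂ) = ((n * (n - 1) / 2 - 1 - 2 * n : ℝ) : ℂ) := by
      rw [hc]; push_cast; ring
    have hdI : d = Complex.I * ((-(t * (n * (n - 1) / 2 - 1 - 2 * n)) : ℝ) : ℂ) := by
      rw [hd, hs, hw]; push_cast; ring
    rw [hdI, Complex.norm_exp]
    simp
  have h2 : ‖α‖ ≤ 2 := by
    have hun : u * (n : ℂ) = Complex.I * ((-(2 * t * n) : ℝ) : ℂ) := by
      rw [hu, hs]; push_cast; ring
    have habs1 : ‖Complex.exp (u * n)‖ = 1 := by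
      rw [hun, Complex.norm_exp]; simp
    calc ‖α‖ ≤ ‖Complex.exp (u * n)‖ + 1 := by
          simpa [hα] using norm_sub_le (Complex.exp (u * n)) 1
      _ = 2 := by rw [habs1]; norm_num
  have h3 : ‖(n : ℂ)⁻¹‖ = (n : ℝ)⁻¹ := by simp
  rw [h1, h3, one_mul, div_eq_mul_inv]
  have hninv : (0 : ℝ) ≤ (n : ℝ)⁻¹ := by positivity
  exact mul_le_mul_of_nonneg_right h2 hninv
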